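/- For every ξ ∈ m the adjoint action ad ξ : u ↦ ξu − uξ on U preserves the left ideal U·m_χ, i.e. [ξ, U·m_χ] ⊆ U·m_χ; consequently ad m descends to an action of m on the quotient U/U·m_χ. -/

import Mathlib

section Aux

variable {K : Type*} [Field K] [CharZero K]
variable {g : Type*} [LieRing g] [LieAlgebra K g] [FiniteDimensional K g]

lemma aux_eigen_bracket (h x y : g) {a b : K}
    (hx : x ∈ Module.End.eigenspace (LieAlgebra.ad K g h) a)
    (hy : y ∈ Module.End.eigenspace (LieAlgebra.ad K g h) b) :
    ⁅x, y⁆ ∈ Module.End.eigenspace (LieAlgebra.ad K g h) (a + b) := by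
  rw [Module.End.mem_eigenspace_iff] at *
  simp only [LieAlgebra.ad_apply] at *
  rw [leibniz_lie, hx, hy, smul_lie, lie_smul, add_smul]

lemma aux_killing_orth (e h y : g) (hhe : ⁅h, e⁆ = (2 : K) • e)
    {c : ℤ} (hc : c ≠ -2)
    (hy : y ∈ Module.End.eigenspace (LieAlgebra.ad K g h) (c : K)) :
    killingForm K g e y = 0 := by
  rw [Module.End.mem_eigenspace_iff] at hy
  simp only [LieAlgebra.ad_apply] at hy
  have h1 : killingForm K g ⁅h, e⁆ y = - killingForm K g e ⁅h, y⁆ :=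
    LieModule.traceForm_apply_lie_apply' K g g h e y
  rw [hhe, hy] at h1
  simp only [map_smul, LinearMap.smul_apply, smul_eq_mul] at h1
  have h2 : ((2 : K) + (c : K)) * killingForm K g e y = 0 := by linear_combination h1
  have h3 : (2 : K) + (c : K) ≠ 0 := by
    have : ((2 + c : ℤ) : K) ≠ 0 := by rw [Int.cast_ne_zero]; omega
    push_cast at this; exact this
  exact (mul_eq_zero.mp h2).resolve_left h3
  
end Aux

/-- For every `ξ ∈ m` the adjoint action `ad ξ : u ↦ ξu − uξ` on `U` preserves
the left ideal `U·m_χ`, i.e. `[ξ, U·m_χ] ⊆ U·m_χ`; consequently `ad m` descends to an action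
of `m` on the quotient `U/U·m_χ`. -/
theorem ad_m_preserves_left_ideal
    (K : Type*) [Field K] [IsAlgClosed K] [CharZero K]
    (g : Type*) [LieRing g] [LieAlgebra K g] [FiniteDimensional K g]
    [LieAlgebra.IsSemisimple K g]
    (e h f : g) (he : e ≠ 0)
    (hhe : ⁅h, e⁆ = (2 : K) • e) (hhf : ⁅h, f⁆ = (-2 : K) • f) (hef : ⁅e, f⁆ = h)
    (l : Submodule K g)
    (hl : l ≤ Module.End.eigenspace (LieAlgebra.ad K g h) ((-1 : ℤ) : K))
    (hiso : ∀ x ∈ l, ∀ y ∈ l, killingForm K g e ⁅x, y⁆ = 0)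
    (hmax : ∀ l' : Submodule K g,
      l' ≤ Module.End.eigenspace (LieAlgebra.ad K g h) ((-1 : ℤ) : K) →
      (∀ x ∈ l', ∀ y ∈ l', killingForm K g e ⁅x, y⁆ = 0) → l ≤ l' → l' = l)
    (m : Submodule K g)
    (hm : m = l ⊔ ⨆ i : ℤ, ⨆ _ : i ≤ -2,
      Module.End.eigenspace (LieAlgebra.ad K g h) (i : K))
    -- the left ideal `U·m_χ` generated by `m_χ = {ξ − χ(ξ)·1 : ξ ∈ m}`
    (I : Submodule (UniversalEnvelopingAlgebra K g) (UniversalEnvelopingAlgebra K g))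
    (hI : I = Submodule.span (UniversalEnvelopingAlgebra K g)
      {u : UniversalEnvelopingAlgebra K g | ∃ ξ ∈ m,
        u = UniversalEnvelopingAlgebra.ι K ξ -
          algebraMap K (UniversalEnvelopingAlgebra K g) (killingForm K g e ξ)}) :
    ∀ ξ ∈ m, ∀ a ∈ I,
      UniversalEnvelopingAlgebra.ι K ξ * a - a * UniversalEnvelopingAlgebra.ι K ξ ∈ I := by
  set E : ℤ → Submodule K g :=
    fun i => Module.End.eigenspace (LieAlgebra.ad K g h) ((i : ℤ) : K) with hE
  -- eigenspace of sum membership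
  have hEm : ∀ (i : ℤ), i ≤ -2 → E i ≤ m := by
    intro i hi
    rw [hm]
    refine le_trans ?_ le_sup_right
    exact le_iSup₂ (f := fun (i : ℤ) (_ : i ≤ -2) =>
      Module.End.eigenspace (LieAlgebra.ad K g h) ((i : ℤ) : K)) i hi
  have hbr : ∀ (a b : ℤ), ∀ x ∈ E a, ∀ y ∈ E b, ⁅x, y⁆ ∈ E (a + b) := by
    intro a b x hx y hy
    have := aux_eigen_bracket h x y hx hy
    have hc : ((a : K) + (b : K)) = (((a + b : ℤ)) : K) := by push_cast; ring
    rwa [hc] at this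
  -- the submodule of `y` such that `⁅x,y⁆ ∈ m` and `κ(e,⁅x,y⁆) = 0`
  set S : g → Submodule K g := fun x =>
    (Submodule.comap (LieAlgebra.ad K g x) m) ⊓
      (LinearMap.ker ((killingForm K g e) ∘ₗ (LieAlgebra.ad K g x : g →ₗ[K] g))) with hS
  have hSmem : ∀ x y : g, y ∈ S x ↔ (⁅x, y⁆ ∈ m ∧ killingForm K g e ⁅x, y⁆ = 0) := by
    intro x y
    simp [hS, Submodule.mem_inf, Submodule.mem_comap, LinearMap.mem_ker,
      LieAlgebra.ad_apply]
  have hsymm : ∀ x y : g, y ∈ S x → x ∈ S y := by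
    intro x y hxy
    rw [hSmem] at hxy ⊢
    have : ⁅y, x⁆ = -⁅x, y⁆ := by rw [← lie_skew]
    rw [this]
    exact ⟨neg_mem hxy.1, by rw [map_neg, hxy.2, neg_zero]⟩
  -- basic elements
  have step1 : ∀ x : g, (x ∈ l ∨ ∃ i : ℤ, i ≤ -2 ∧ x ∈ E i) → m ≤ S x := by
    intro x hx
    rw [hm]
    apply sup_le
    · -- y ∈ l
      intro y hy
      rw [hSmem]
      rcases hx with hxl | ⟨i, hi, hxe⟩
      · refine ⟨?_, hiso x hxl y hy⟩
        have := hbr (-1) (-1) x (hl hxl) y (hl hy)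
        exact hEm (-2) le_rfl this
      · have hb := hbr i (-1) x hxe y (hl hy)
        refine ⟨hEm (i + -1) (by omega) hb, ?_⟩
        exact aux_killing_orth e h _ hhe (by omega) hb
    · refine iSup₂_le fun j hj => ?_
      intro y hy
      rw [hSmem]
      rcases hx with hxl | ⟨i, hi, hxe⟩
      · have hb := hbr (-1) j x (hl hxl) y hy
        exact ⟨hEm (-1 + j) (by omega) hb,
          aux_killing_orth e h _ hhe (by omega) hb⟩
      · have hb := hbr i j x hxe y hy
        exact ⟨hEm (i + j) (by omega) hb,
          aux_killing_orth e h _ hhe (by omega) hb⟩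
  -- all elements
  have key : ∀ x ∈ m, ∀ y ∈ m, ⁅x, y⁆ ∈ m ∧ killingForm K g e ⁅x, y⁆ = 0 := by
    intro x hx y hy
    rw [← hSmem]
    revert x hx
    have : m ≤ S y → ∀ x ∈ m, y ∈ S x := fun hle x hx => hsymm y x (hle hx)
    apply this
    rw [hm]
    apply sup_le
    · intro z hz
      exact hsymm z y (step1 z (Or.inl hz) (by rw [hm] at hy ⊢; exact hy))
    · refine iSup₂_le fun j hj => ?_
      intro z hz
      exact hsymm z y (step1 z (Or.inr ⟨j, hj, hz⟩) (by rw [hm] at hy ⊢; exact hy))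
  -- now the enveloping algebra part
  intro ξ hξ a ha
  subst hI
  induction ha using Submodule.span_induction with
  | mem u hu =>
      obtain ⟨η, hη, rfl⟩ := hu
      have hcomm : ∀ c : K, ∀ v : UniversalEnvelopingAlgebra K g,
          v * algebraMap K _ c = algebraMap K _ c * v := fun c v =>
        (Algebra.commutes c v).symm
      have hkey := key ξ hξ η hη
      have hbrkt : UniversalEnvelopingAlgebra.ι K ξ * UniversalEnvelopingAlgebra.ι K η -
          UniversalEnvelopingAlgebra.ι K η * UniversalEnvelopingAlgebra.ι K ξ =
          UniversalEnvelopingAlgebra.ι K ⁅ξ, η⁆ := by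
        letI : LieRing (UniversalEnvelopingAlgebra K g) := LieRing.ofAssociativeRing
        rw [LieHom.map_lie, Ring.lie_def]
      have heq : UniversalEnvelopingAlgebra.ι K ξ *
            (UniversalEnvelopingAlgebra.ι K η -
              algebraMap K (UniversalEnvelopingAlgebra K g) (killingForm K g e η)) -
          (UniversalEnvelopingAlgebra.ι K η -
              algebraMap K (UniversalEnvelopingAlgebra K g) (killingForm K g e η)) *
            UniversalEnvelopingAlgebra.ι K ξ =
          UniversalEnvelopingAlgebra.ι K ⁅ξ, η⁆ -
            algebraMap K (UniversalEnvelopingAlgebra K g)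
              (killingForm K g e ⁅ξ, η⁆) := by
        rw [hkey.2, map_zero, sub_zero, ← hbrkt, mul_sub, sub_mul,
          hcomm (killingForm K g e η) (UniversalEnvelopingAlgebra.ι K ξ)]
        noncomm_ring
      rw [heq]
      exact Submodule.subset_span ⟨⁅ξ, η⁆, hkey.1, rfl⟩
  | zero => simp
  | add u v hu hv ihu ihv =>
      have : UniversalEnvelopingAlgebra.ι K ξ * (u + v) -
          (u + v) * UniversalEnvelopingAlgebra.ι K ξ =
          (UniversalEnvelopingAlgebra.ι K ξ * u - u * UniversalEnvelopingAlgebra.ι K ξ) +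
          (UniversalEnvelopingAlgebra.ι K ξ * v - v * UniversalEnvelopingAlgebra.ι K ξ) := by
        noncomm_ring
      rw [this]
      exact add_mem ihu ihv
  | smul u v hv ihv =>
      have : UniversalEnvelopingAlgebra.ι K ξ * (u • v) -
          (u • v) * UniversalEnvelopingAlgebra.ι K ξ =
          (UniversalEnvelopingAlgebra.ι K ξ * u - u * UniversalEnvelopingAlgebra.ι K ξ) * v +
          u * (UniversalEnvelopingAlgebra.ι K ξ * v - v * UniversalEnvelopingAlgebra.ι K ξ) := by
        rw [smul_eq_mul]; noncomm_ring
      rw [this]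
      refine add_mem ?_ ?_
      · exact Submodule.smul_mem _ _ hv
      · exact Submodule.smul_mem _ _ ihv
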